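/- Let T > 0 satisfy cosh T = T·sinh T and set c = 1/(T·cosh T), a = c²/4, b = −a·sinh² T, and u(t) = −a·cosh² t + b·(1 − t·tanh t). Then: (i) u''(t) + (2/cosh² t)·u(t) = −c²·cosh² t for all t ∈ ℝ (so that Ju = −1 for the Jacobi operator of the critical catenoid); (ii) T·u'(T) = u(T) and T·u'(−T) = −u(−T) (the Robin condition ∇_η u = u); and (iii) ∫_{−T}^{T} u(t)·cosh²(t) dt < 0 (so the integral of u over the catenoid is negative). -/

import Mathlib

open Real

lemma aux_cosh_ne (t : ℝ) : Real.cosh t ≠ 0 := (Real.cosh_pos t).ne'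

lemma aux_tanh_eq : Real.tanh = fun x => Real.sinh x / Real.cosh x :=
  funext fun x => Real.tanh_eq_sinh_div_cosh x

lemma aux_hasDerivAt_u (a b t : ℝ) :
    HasDerivAt (fun s => -a * Real.cosh s ^ 2 + b * (1 - s * Real.tanh s))
      (-(2*a) * Real.sinh t * Real.cosh t
        - b * (Real.sinh t / Real.cosh t + t / Real.cosh t ^ 2)) t := by
  have hc0 : Real.cosh t ≠ 0 := aux_cosh_ne t
  have h1 := Real.hasDerivAt_cosh t
  have h2 := Real.hasDerivAt_sinh t
  have hp : HasDerivAt (fun s => Real.cosh s ^ 2)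
      (2 * Real.cosh t ^ 1 * Real.sinh t) t := h1.pow 2
  have hdiv : HasDerivAt (fun s => Real.sinh s / Real.cosh s)
      ((Real.cosh t * Real.cosh t - Real.sinh t * Real.sinh t) / Real.cosh t ^ 2) t :=
    h2.div h1 hc0
  have hmul : HasDerivAt (fun s => s * (Real.sinh s / Real.cosh s))
      (1 * (Real.sinh t / Real.cosh t)
        + t * ((Real.cosh t * Real.cosh t - Real.sinh t * Real.sinh t) / Real.cosh t ^ 2)) t :=
    (hasDerivAt_id t).mul hdiv
  have h : HasDerivAt (fun s => -a * Real.cosh s ^ 2 + b * (1 - s * (Real.sinh s / Real.cosh s)))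
      ((-a) * (2 * Real.cosh t ^ 1 * Real.sinh t)
        + b * (0 - (1 * (Real.sinh t / Real.cosh t)
          + t * ((Real.cosh t * Real.cosh t - Real.sinh t * Real.sinh t) / Real.cosh t ^ 2)))) t :=
    (hp.const_mul (-a)).add (((hasDerivAt_const t (1:ℝ)).sub hmul).const_mul b)
  rw [aux_tanh_eq]
  convert h using 1
  have hcs := Real.cosh_sq_sub_sinh_sq t
  field_simp
  linear_combination (b * t) * hcs

lemma aux_hasDerivAt_v (a b t : ℝ) :
    HasDerivAt (fun s => -(2*a) * Real.sinh s * Real.cosh s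
        - b * (Real.sinh s / Real.cosh s + s / Real.cosh s ^ 2))
      (-(2*a) * (Real.cosh t ^ 2 + Real.sinh t ^ 2)
        - b * ((2 - 2 * t * (Real.sinh t / Real.cosh t)) / Real.cosh t ^ 2)) t := by
  have hc0 : Real.cosh t ≠ 0 := aux_cosh_ne t
  have hc0' : Real.cosh t ^ 2 ≠ 0 := pow_ne_zero 2 hc0
  have h1 := Real.hasDerivAt_cosh t
  have h2 := Real.hasDerivAt_sinh t
  have hp : HasDerivAt (fun s => Real.cosh s ^ 2)
      (2 * Real.cosh t ^ 1 * Real.sinh t) t := h1.pow 2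
  have hprod : HasDerivAt (fun s => Real.sinh s * Real.cosh s)
      (Real.cosh t * Real.cosh t + Real.sinh t * Real.sinh t) t := h2.mul h1
  have hdiv : HasDerivAt (fun s => Real.sinh s / Real.cosh s)
      ((Real.cosh t * Real.cosh t - Real.sinh t * Real.sinh t) / Real.cosh t ^ 2) t :=
    h2.div h1 hc0
  have hdiv2 : HasDerivAt (fun s => s / Real.cosh s ^ 2)
      ((1 * Real.cosh t ^ 2 - t * (2 * Real.cosh t ^ 1 * Real.sinh t)) / (Real.cosh t ^ 2) ^ 2) t :=
    (hasDerivAt_id t).div hp hc0'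
  have h : HasDerivAt (fun s => -(2*a) * Real.sinh s * Real.cosh s
        - b * (Real.sinh s / Real.cosh s + s / Real.cosh s ^ 2))
      (-(2*a) * (Real.cosh t * Real.cosh t + Real.sinh t * Real.sinh t)
        - b * ((Real.cosh t * Real.cosh t - Real.sinh t * Real.sinh t) / Real.cosh t ^ 2
          + (1 * Real.cosh t ^ 2 - t * (2 * Real.cosh t ^ 1 * Real.sinh t)) / (Real.cosh t ^ 2) ^ 2)) t := by
    have := (hprod.const_mul (-(2*a))).fun_sub ((hdiv.fun_add hdiv2).const_mul b)
    convert this using 2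
    · rfl
    · rfl
    · ring
  convert h using 1
  have hcs := Real.cosh_sq_sub_sinh_sq t
  field_simp
  linear_combination (b * Real.cosh t) * hcs

theorem critical_catenoid_typeI_witness
    (T : ℝ) (hT : 0 < T) (hTeq : Real.cosh T = T * Real.sinh T)
    (c a b : ℝ)
    (hc : c = 1 / (T * Real.cosh T))
    (ha : a = c ^ 2 / 4)
    (hb : b = -a * Real.sinh T ^ 2)
    (u : ℝ → ℝ)
    (hu : u = fun t => -a * Real.cosh t ^ 2 + b * (1 - t * Real.tanh t)) :
    (∀ t : ℝ, deriv (deriv u) t + (2 / Real.cosh t ^ 2) * u t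
        = -c ^ 2 * Real.cosh t ^ 2) ∧
    (T * deriv u T = u T ∧ T * deriv u (-T) = -(u (-T))) ∧
    (∫ t in (-T)..T, u t * Real.cosh t ^ 2) < 0 := by
  have hderiv : deriv u = fun t => -(2*a) * Real.sinh t * Real.cosh t
      - b * (Real.sinh t / Real.cosh t + t / Real.cosh t ^ 2) := by
    funext t
    exact (hu ▸ aux_hasDerivAt_u a b t).deriv
  have hderiv2 : ∀ t, deriv (deriv u) t = -(2*a) * (Real.cosh t ^ 2 + Real.sinh t ^ 2)
      - b * ((2 - 2 * t * (Real.sinh t / Real.cosh t)) / Real.cosh t ^ 2) := by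
    intro t
    rw [hderiv]
    exact (aux_hasDerivAt_v a b t).deriv
  have hcT : Real.cosh T ≠ 0 := aux_cosh_ne T
  have hcT0 : 0 < Real.cosh T := Real.cosh_pos T
  have hcpos : 0 < c := by
    rw [hc]; positivity
  have hapos : 0 < a := by rw [ha]; positivity
  have hsTpos : 0 < Real.sinh T := by
    have := Real.sinh_pos_iff (x := T); exact this.mpr hT
  have hbneg : b < 0 := by
    rw [hb]; have := pow_pos hsTpos 2; nlinarith
  have hca : c ^ 2 = 4 * a := by rw [ha]; ring
  refine ⟨?_, ⟨?_, ?_⟩, ?_⟩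
  · intro t
    rw [hderiv2 t]
    have hc0 : Real.cosh t ≠ 0 := aux_cosh_ne t
    have hcs := Real.cosh_sq_sub_sinh_sq t
    simp only [hu, Real.tanh_eq_sinh_div_cosh]
    field_simp
    linear_combination (2 * a * Real.cosh t ^ 3) * hcs + Real.cosh t ^ 5 * hca
  · have hcs := Real.cosh_sq_sub_sinh_sq T
    simp only [hderiv]
    simp only [hu, Real.tanh_eq_sinh_div_cosh]
    field_simp
    linear_combination
      (2 * a * Real.cosh T ^ 3 - a * (Real.cosh T + T * Real.sinh T)) * hTeq
      - (T ^ 2 + Real.cosh T ^ 2) * hb - a * Real.cosh T ^ 2 * hcs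
  · have hcs := Real.cosh_sq_sub_sinh_sq T
    simp only [hderiv]
    simp only [hu, Real.sinh_neg, Real.cosh_neg, Real.tanh_eq_sinh_div_cosh, neg_div, mul_neg, neg_neg]
    field_simp
    linear_combination
      (-(2 * a * Real.cosh T ^ 3 - a * (Real.cosh T + T * Real.sinh T))) * hTeq
      + (T ^ 2 + Real.cosh T ^ 2) * hb + a * Real.cosh T ^ 2 * hcs
  · -- integral part
    have hkey : ∀ x ∈ Set.Icc (-T) T, x * Real.sinh x ≤ Real.cosh x := by
      have hg : ∀ s : ℝ, HasDerivAt (fun s => Real.cosh s - s * Real.sinh s)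
          (-(s * Real.cosh s)) s := by
        intro s
        have := (Real.hasDerivAt_cosh s).fun_sub ((hasDerivAt_id s).fun_mul (Real.hasDerivAt_sinh s))
        convert this using 1
        · rfl
        · rfl
        · rfl
        simp only [id_eq]
        ring
      have hanti : AntitoneOn (fun s => Real.cosh s - s * Real.sinh s) (Set.Icc 0 T) := by
        apply antitoneOn_of_deriv_nonpos (convex_Icc 0 T)
        · exact (Real.continuous_cosh.sub (continuous_id.mul Real.continuous_sinh)).continuousOn
        · intro x _
          exact (hg x).differentiableAt.differentiableWithinAt
        · intro x hx
          rw [interior_Icc] at hx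
          rw [(hg x).deriv]
          have : 0 < Real.cosh x := Real.cosh_pos x
          nlinarith [hx.1]
      intro x hx
      have habs : |x| ∈ Set.Icc (0:ℝ) T := by
        constructor
        · exact abs_nonneg x
        · rw [abs_le]; exact ⟨hx.1, hx.2⟩
      have h1 : Real.cosh |x| - |x| * Real.sinh |x| ≥ Real.cosh T - T * Real.sinh T := by
        have := hanti habs (Set.right_mem_Icc.mpr hT.le) habs.2
        simpa using this
      have h2 : Real.cosh T - T * Real.sinh T = 0 := by rw [hTeq]; ring
      have h3 : Real.cosh |x| = Real.cosh x := Real.cosh_abs x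
      have h4 : |x| * Real.sinh |x| = x * Real.sinh x := by
        rcases le_or_gt 0 x with h | h
        · rw [abs_of_nonneg h]
        · rw [abs_of_neg h, Real.sinh_neg]; ring
      rw [h3, h4] at h1
      linarith
    have hcont : Continuous u := by
      rw [hu, aux_tanh_eq]
      exact (continuous_const.mul (Real.continuous_cosh.pow 2)).add
        (continuous_const.mul (continuous_const.sub (continuous_id.mul
          (Real.continuous_sinh.div Real.continuous_cosh aux_cosh_ne))))
    have hneg : ∀ x ∈ Set.Icc (-T) T, u x * Real.cosh x ^ 2 < 0 := by
      intro x hx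
      have hcx : 0 < Real.cosh x := Real.cosh_pos x
      have h1 : x * Real.tanh x ≤ 1 := by
        rw [Real.tanh_eq_sinh_div_cosh, ← mul_div_assoc]
        exact (div_le_one hcx).mpr (hkey x hx)
      have hux : u x < 0 := by
        rw [hu]
        simp only
        nlinarith [mul_pos hapos (pow_pos hcx 2),
          mul_nonneg (neg_nonneg.mpr hbneg.le) (sub_nonneg.mpr h1)]
      exact mul_neg_of_neg_of_pos hux (pow_pos hcx 2)
    have hTlt : -T < T := by linarith
    have hpos : 0 < ∫ t in (-T)..T, -(u t * Real.cosh t ^ 2) := by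
      apply intervalIntegral.integral_pos hTlt
      · exact ((hcont.mul (Real.continuous_cosh.pow 2)).neg).continuousOn
      · intro x hx
        have := hneg x ⟨hx.1.le, hx.2⟩
        linarith
      · exact ⟨T, Set.right_mem_Icc.mpr hTlt.le,
          by have := hneg T (Set.right_mem_Icc.mpr hTlt.le); linarith⟩
    rw [intervalIntegral.integral_neg] at hpos
    linarith
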